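/- If U_RU, U_LU, U_LD, U_RD ∈ G and the wave speeds are S_L = 2·min over the four states of λ_A^{(1)}, S_R = 2·max of λ_A^{(4)}, S_D = 2·min of λ_B^{(1)}, S_U = 2·max of λ_B^{(4)}, with S_L < 0 < S_R and S_D < 0 < S_U, then the 2D HLL intermediate state U* = (D*, m*, E*) satisfies D* > 0, E* > 0, and (E*)² - (D*)² - |m*|² > 0, i.e. U* ∈ G. -/

import Mathlib

set_option maxHeartbeats 4000000

/-- A 2D special RHD state given by primitive variables. -/
structure RHDState where
  ρ : ℝ
  u1 : ℝ
  u2 : ℝ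
  p : ℝ
  hρ : 0 < ρ
  hp : 0 < p
  hu : u1 ^ 2 + u2 ^ 2 < 1

namespace RHDState

/-- Lorentz factor `γ = 1/√(1-|u|²)`. -/
noncomputable def lorentz (s : RHDState) : ℝ :=
  1 / Real.sqrt (1 - (s.u1 ^ 2 + s.u2 ^ 2))

/-- Specific enthalpy `h = 1 + e + p/ρ` with `e = p/((Γ-1)ρ)`. -/
noncomputable def enth (Γ : ℝ) (s : RHDState) : ℝ :=
  1 + s.p / ((Γ - 1) * s.ρ) + s.p / s.ρ

/-- Sound speed `c_s = √(Γp/(ρh))`. -/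
noncomputable def cs (Γ : ℝ) (s : RHDState) : ℝ :=
  Real.sqrt (Γ * s.p / (s.ρ * s.enth Γ))

/-- Conserved mass density `D = ργ`. -/
noncomputable def D (s : RHDState) : ℝ := s.ρ * s.lorentz

/-- Momentum `m₁ = ρhγ²u₁`. -/
noncomputable def m1 (Γ : ℝ) (s : RHDState) : ℝ :=
  s.ρ * s.enth Γ * s.lorentz ^ 2 * s.u1

/-- Momentum `m₂ = ρhγ²u₂`. -/
noncomputable def m2 (Γ : ℝ) (s : RHDState) : ℝ :=
  s.ρ * s.enth Γ * s.lorentz ^ 2 * s.u2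

/-- Total energy `E = ρhγ² - p`. -/
noncomputable def En (Γ : ℝ) (s : RHDState) : ℝ :=
  s.ρ * s.enth Γ * s.lorentz ^ 2 - s.p

/-- Conserved vector `U = (D, m₁, m₂, E)`. -/
noncomputable def U (Γ : ℝ) (s : RHDState) : Fin 4 → ℝ :=
  ![s.D, s.m1 Γ, s.m2 Γ, s.En Γ]

/-- `x`-direction flux `F(U) = (Du₁, m₁u₁ + p, m₂u₁, (E+p)u₁)`. -/
noncomputable def Fx (Γ : ℝ) (s : RHDState) : Fin 4 → ℝ :=
  ![s.D * s.u1, s.m1 Γ * s.u1 + s.p, s.m2 Γ * s.u1, (s.En Γ + s.p) * s.u1]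

/-- `y`-direction flux `G(U) = (Du₂, m₁u₂, m₂u₂ + p, (E+p)u₂)`. -/
noncomputable def Fy (Γ : ℝ) (s : RHDState) : Fin 4 → ℝ :=
  ![s.D * s.u2, s.m1 Γ * s.u2, s.m2 Γ * s.u2 + s.p, (s.En Γ + s.p) * s.u2]

/-- Smallest eigenvalue of `∂F/∂U`. -/
noncomputable def lamX1 (Γ : ℝ) (s : RHDState) : ℝ :=
  (s.u1 * (1 - (s.cs Γ) ^ 2) - s.cs Γ / s.lorentz *
      Real.sqrt (1 - s.u1 ^ 2 - (s.cs Γ) ^ 2 * s.u2 ^ 2)) /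
    (1 - (s.cs Γ) ^ 2 * (s.u1 ^ 2 + s.u2 ^ 2))

/-- Largest eigenvalue of `∂F/∂U`. -/
noncomputable def lamX4 (Γ : ℝ) (s : RHDState) : ℝ :=
  (s.u1 * (1 - (s.cs Γ) ^ 2) + s.cs Γ / s.lorentz *
      Real.sqrt (1 - s.u1 ^ 2 - (s.cs Γ) ^ 2 * s.u2 ^ 2)) /
    (1 - (s.cs Γ) ^ 2 * (s.u1 ^ 2 + s.u2 ^ 2))

/-- Smallest eigenvalue of `∂G/∂U`. -/
noncomputable def lamY1 (Γ : ℝ) (s : RHDState) : ℝ :=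
  (s.u2 * (1 - (s.cs Γ) ^ 2) - s.cs Γ / s.lorentz *
      Real.sqrt (1 - s.u2 ^ 2 - (s.cs Γ) ^ 2 * s.u1 ^ 2)) /
    (1 - (s.cs Γ) ^ 2 * (s.u1 ^ 2 + s.u2 ^ 2))

/-- Largest eigenvalue of `∂G/∂U`. -/
noncomputable def lamY4 (Γ : ℝ) (s : RHDState) : ℝ :=
  (s.u2 * (1 - (s.cs Γ) ^ 2) + s.cs Γ / s.lorentz *
      Real.sqrt (1 - s.u2 ^ 2 - (s.cs Γ) ^ 2 * s.u1 ^ 2)) /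
    (1 - (s.cs Γ) ^ 2 * (s.u1 ^ 2 + s.u2 ^ 2))

end RHDState

/-- The admissible set `G` in conserved variables `(D, m₁, m₂, E)`. -/
def admissibleSet : Set (Fin 4 → ℝ) :=
  {X | X 0 > 0 ∧ X 3 - Real.sqrt ((X 0) ^ 2 + (X 1) ^ 2 + (X 2) ^ 2) > 0}

section PCPAux

def good (X : Fin 4 → ℝ) : Prop :=
  0 < X 0 ∧ 0 < X 3 ∧ (X 0) ^ 2 + (X 1) ^ 2 + (X 2) ^ 2 < (X 3) ^ 2

lemma good_add {X Y : Fin 4 → ℝ} (hX : good X) (hY : good Y) : good (X + Y) := by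
  obtain ⟨hX0, hX3, hXq⟩ := hX
  obtain ⟨hY0, hY3, hYq⟩ := hY
  refine ⟨by simpa using add_pos hX0 hY0, by simpa using add_pos hX3 hY3, ?_⟩
  simp only [Pi.add_apply]
  have key : X 0 * Y 0 + X 1 * Y 1 + X 2 * Y 2 < X 3 * Y 3 := by
    nlinarith [sq_nonneg (X 0 * Y 1 - X 1 * Y 0), sq_nonneg (X 0 * Y 2 - X 2 * Y 0),
      sq_nonneg (X 1 * Y 2 - X 2 * Y 1), mul_pos hX3 hY3, sq_nonneg (X 0 * Y 0 + X 1 * Y 1 + X 2 * Y 2),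
      sq_nonneg (X 0 * Y 0 + X 1 * Y 1 + X 2 * Y 2 - X 3 * Y 3),
      sq_nonneg (X 0 * Y 0 + X 1 * Y 1 + X 2 * Y 2 + X 3 * Y 3)]
  nlinarith [key]

lemma good_smul {a : ℝ} (ha : 0 < a) {X : Fin 4 → ℝ} (hX : good X) : good (a • X) := by
  obtain ⟨hX0, hX3, hXq⟩ := hX
  refine ⟨by simpa using mul_pos ha hX0, by simpa using mul_pos ha hX3, ?_⟩
  simp only [Pi.smul_apply, smul_eq_mul]
  nlinarith [sq_nonneg a, mul_pos ha ha]


lemma pos_aux {X Y Z : ℝ} (hZ : 0 < Z) (h : Z * X = Y) (hY : 0 < Y) : 0 < X := by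
  rcases le_or_gt X 0 with hX | hX
  · nlinarith [mul_nonneg hZ.le (neg_nonneg.2 hX)]
  · exact hX

/-- Thermodynamic facts from the EOS. -/
lemma eos_facts (Γ R P h : ℝ) (hΓ1 : 1 < Γ) (hΓ2 : Γ ≤ 2) (hR : 0 < R) (hP : 0 < P)
    (hh1 : 1 < h) (hRh_eq : (Γ - 1) * (R * h) = (Γ - 1) * R + Γ * P) :
    0 < R ^ 2 * h ^ 2 - 2 * R * h * P - R ^ 2 ∧ P < R * h ∧ Γ * P < R * h ∧
      P * (R * h) < Γ * (R ^ 2 * h ^ 2 - 2 * R * h * P - R ^ 2 + P ^ 2) := by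
  have hΓ1' : 0 < Γ - 1 := by linarith
  have hRh : 0 < R * h := mul_pos hR (by linarith)
  have hstep : 0 ≤ R * h - 2 * P - R := by
    have h2 : (Γ - 1) * (R * h - 2 * P - R) = P * (2 - Γ) := by linear_combination hRh_eq
    nlinarith [mul_nonneg hP.le (by linarith : (0:ℝ) ≤ 2 - Γ)]
  refine ⟨?_, ?_, ?_, ?_⟩
  · nlinarith [mul_nonneg hRh.le hstep, mul_pos (mul_pos hR hR) (by linarith : (0:ℝ) < h - 1)]
  · nlinarith [mul_pos hΓ1' hR]
  · nlinarith [mul_pos hΓ1' hR]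
  · have hid : (Γ - 1) ^ 2 * (Γ * (R ^ 2 * h ^ 2 - 2 * R * h * P - R ^ 2 + P ^ 2) - P * (R * h))
        = P * ((Γ - 1) * (Γ + 1) * R + Γ * P * (2 - Γ)) := by
      linear_combination (Γ * (Γ - 1) * (R * h) + Γ * (Γ - 1) * R + (-Γ ^ 2 + Γ + 1) * P) * hRh_eq
    have hrhs : 0 < P * ((Γ - 1) * (Γ + 1) * R + Γ * P * (2 - Γ)) := by
      have h1 : 0 < (Γ - 1) * (Γ + 1) * R := by positivity
      have h2 : 0 ≤ Γ * P * (2 - Γ) := mul_nonneg (by positivity) (by linarith)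
      nlinarith
    have := pos_aux (show (0:ℝ) < (Γ - 1) ^ 2 by positivity) hid hrhs
    linarith

/-- The wave-speed inequality: `c` dominates the largest eigenvalue. -/
lemma psi_facts (u v c cs r q : ℝ) (huv : u ^ 2 + v ^ 2 < 1) (hc : 0 < c)
    (hr2 : r ^ 2 = 1 - (u ^ 2 + v ^ 2)) (hr : 0 < r)
    (hcs0 : 0 < cs) (hcs1 : cs ^ 2 < 1)
    (hq2 : q ^ 2 = 1 - u ^ 2 - cs ^ 2 * v ^ 2) (hq : 0 < q)
    (hlam : (u * (1 - cs ^ 2) + cs * r * q) / (1 - cs ^ 2 * (u ^ 2 + v ^ 2)) ≤ c) :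
    u < c ∧ cs ^ 2 * (1 - c ^ 2) * (1 - (u ^ 2 + v ^ 2)) ≤ (1 - cs ^ 2) * (c - u) ^ 2 := by
  have hA : 0 < 1 - cs ^ 2 * (u ^ 2 + v ^ 2) := by nlinarith [sq_nonneg u, sq_nonneg v]
  have hid1 : q ^ 2 - (u * cs * r) ^ 2 = (1 - u ^ 2) * (1 - cs ^ 2 * (u ^ 2 + v ^ 2)) := by
    linear_combination hq2 - u ^ 2 * cs ^ 2 * hr2
  have hqu : u * cs * r < q := by
    nlinarith [hid1, hq, mul_pos hA (by nlinarith [sq_nonneg v] : (0:ℝ) < 1 - u ^ 2)]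
  have hlamA : u * (1 - cs ^ 2) + cs * r * q ≤ c * (1 - cs ^ 2 * (u ^ 2 + v ^ 2)) := by
    rw [div_le_iff₀ hA] at hlam; linarith
  have hkey : u * (1 - cs ^ 2) + cs * r * q - u * (1 - cs ^ 2 * (u ^ 2 + v ^ 2))
      = cs * r * (q - u * cs * r) := by
    linear_combination (u * cs ^ 2) * hr2
  have hcu : u < c := by
    have h1 : 0 < cs * r * (q - u * cs * r) := mul_pos (mul_pos hcs0 hr) (by linarith)
    exact lt_of_mul_lt_mul_right (by nlinarith) hA.le
  refine ⟨hcu, ?_⟩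
  have hlam1A : u * (1 - cs ^ 2) - cs * r * q ≤ c * (1 - cs ^ 2 * (u ^ 2 + v ^ 2)) := by
    nlinarith [mul_pos (mul_pos hcs0 hr) hq]
  have hI2 : (1 - cs ^ 2 * (u ^ 2 + v ^ 2)) *
        ((1 - cs ^ 2) * (c - u) ^ 2 - cs ^ 2 * (1 - c ^ 2) * (1 - (u ^ 2 + v ^ 2)))
      = ((1 - cs ^ 2 * (u ^ 2 + v ^ 2)) * c - (u * (1 - cs ^ 2) + cs * r * q)) *
        ((1 - cs ^ 2 * (u ^ 2 + v ^ 2)) * c - (u * (1 - cs ^ 2) - cs * r * q)) := by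
    linear_combination (cs ^ 2 * r ^ 2) * hq2 + (cs ^ 2 * (1 - u ^ 2 - cs ^ 2 * v ^ 2)) * hr2
  have f1 : 0 ≤ (1 - cs ^ 2 * (u ^ 2 + v ^ 2)) * c - (u * (1 - cs ^ 2) + cs * r * q) := by
    linarith
  have f2 : 0 ≤ (1 - cs ^ 2 * (u ^ 2 + v ^ 2)) * c - (u * (1 - cs ^ 2) - cs * r * q) := by
    linarith
  nlinarith [mul_nonneg f1 f2, hI2, hA]

/-- Positivity of the main quadratic expression. -/
lemma rhs_pos (Γ R P h u v c cs : ℝ) (hR : 0 < R) (hP : 0 < P) (hc : 0 < c)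
    (hS : 0 < 1 - (u ^ 2 + v ^ 2)) (hcu : u < c) (hcs1 : cs ^ 2 < 1)
    (hRh : 0 < R * h)
    (hcsRh : cs ^ 2 * (R * h) = Γ * P)
    (hK : 0 < R ^ 2 * h ^ 2 - 2 * R * h * P - R ^ 2)
    (hF4 : P * (R * h) < Γ * (R ^ 2 * h ^ 2 - 2 * R * h * P - R ^ 2 + P ^ 2))
    (hpsi : cs ^ 2 * (1 - c ^ 2) * (1 - (u ^ 2 + v ^ 2)) ≤ (1 - cs ^ 2) * (c - u) ^ 2) :
    0 < (c - u) ^ 2 * (R ^ 2 * h ^ 2 - 2 * R * h * P - R ^ 2) * (1 - (u ^ 2 + v ^ 2))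
        + P ^ 2 * (c ^ 2 - 1) * (1 - (u ^ 2 + v ^ 2)) ^ 2 := by
  have hcu2 : 0 < (c - u) ^ 2 := pow_pos (sub_pos.2 hcu) 2
  rcases le_or_gt 1 c with h1c | h1c
  · have e1 : 0 < (c - u) ^ 2 * (R ^ 2 * h ^ 2 - 2 * R * h * P - R ^ 2) *
        (1 - (u ^ 2 + v ^ 2)) := mul_pos (mul_pos hcu2 hK) hS
    have e0 : (0:ℝ) ≤ c ^ 2 - 1 := by nlinarith
    have e2 : 0 ≤ P ^ 2 * (c ^ 2 - 1) * (1 - (u ^ 2 + v ^ 2)) ^ 2 :=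
      mul_nonneg (mul_nonneg (sq_nonneg P) e0) (sq_nonneg _)
    linarith
  · have hc2 : 0 < cs ^ 2 * ((R ^ 2 * h ^ 2 - 2 * R * h * P - R ^ 2) + P ^ 2) - P ^ 2 := by
      refine pos_aux hRh ?_ (mul_pos hP (by linarith [hF4]) :
        (0:ℝ) < P * (Γ * ((R ^ 2 * h ^ 2 - 2 * R * h * P - R ^ 2) + P ^ 2) - P * (R * h)))
      linear_combination ((R ^ 2 * h ^ 2 - 2 * R * h * P - R ^ 2) + P ^ 2) * hcsRh
    have e1 : 0 ≤ (R ^ 2 * h ^ 2 - 2 * R * h * P - R ^ 2) * (1 - (u ^ 2 + v ^ 2)) *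
        ((1 - cs ^ 2) * (c - u) ^ 2 - cs ^ 2 * (1 - c ^ 2) * (1 - (u ^ 2 + v ^ 2))) :=
      mul_nonneg (mul_nonneg hK.le hS.le) (by linarith)
    have e2 : 0 < (1 - c ^ 2) * (1 - (u ^ 2 + v ^ 2)) ^ 2 *
        (cs ^ 2 * ((R ^ 2 * h ^ 2 - 2 * R * h * P - R ^ 2) + P ^ 2) - P ^ 2) := by
      have h1 : 0 < 1 - c ^ 2 := by nlinarith
      exact mul_pos (mul_pos h1 (pow_pos hS 2)) hc2
    refine pos_aux (show (0:ℝ) < 1 - cs ^ 2 by linarith) ?_ (by linarith : (0:ℝ) <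
      (R ^ 2 * h ^ 2 - 2 * R * h * P - R ^ 2) * (1 - (u ^ 2 + v ^ 2)) *
        ((1 - cs ^ 2) * (c - u) ^ 2 - cs ^ 2 * (1 - c ^ 2) * (1 - (u ^ 2 + v ^ 2)))
      + (1 - c ^ 2) * (1 - (u ^ 2 + v ^ 2)) ^ 2 *
        (cs ^ 2 * ((R ^ 2 * h ^ 2 - 2 * R * h * P - R ^ 2) + P ^ 2) - P ^ 2))
    ring

/-- Positivity of energy from the quadratic inequality. -/
lemma en_pos (u V0 V1 V2 V3 : ℝ) (hu : u ^ 2 < 1) (hV0 : 0 < V0) (hVm : u * V1 < V3)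
    (hq : V0 ^ 2 + V1 ^ 2 + V2 ^ 2 < V3 ^ 2) : 0 < V3 := by
  by_contra hn
  push_neg at hn
  have h1 : V1 ^ 2 < V3 ^ 2 := by nlinarith [sq_nonneg V2, pow_pos hV0 2]
  nlinarith [h1, mul_pos (sub_pos.2 hVm) (sub_pos.2 hVm),
    mul_nonneg (sub_pos.2 hVm).le (neg_nonneg.2 hn),
    mul_nonneg (by linarith : (0:ℝ) ≤ 1 - u ^ 2) (sq_nonneg V1)]

lemma main_ineq (Γ R P u v c r h cs q : ℝ)
    (hΓ1 : 1 < Γ) (hΓ2 : Γ ≤ 2) (hR : 0 < R) (hP : 0 < P)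
    (huv : u ^ 2 + v ^ 2 < 1) (hc : 0 < c)
    (hr2 : r ^ 2 = 1 - (u ^ 2 + v ^ 2)) (hr : 0 < r)
    (hh : h = 1 + P / ((Γ - 1) * R) + P / R)
    (hcs2 : cs ^ 2 = Γ * P / (R * h)) (hcs0 : 0 < cs)
    (hq2 : q ^ 2 = 1 - u ^ 2 - cs ^ 2 * v ^ 2) (hq : 0 < q)
    (hlam : (u * (1 - cs ^ 2) + cs * r * q) / (1 - cs ^ 2 * (u ^ 2 + v ^ 2)) ≤ c)
    (V0 V1 V2 V3 : ℝ)
    (hV0 : V0 = (R / r) * (1 - u / c))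
    (hV1 : V1 = (R * h / r ^ 2) * u * (1 - u / c) - P / c)
    (hV2 : V2 = (R * h / r ^ 2) * v * (1 - u / c))
    (hV3 : V3 = (R * h / r ^ 2) * (1 - u / c) - P) :
    0 < V0 ∧ 0 < V3 ∧ V0 ^ 2 + V1 ^ 2 + V2 ^ 2 < V3 ^ 2 := by
  have hΓ1' : 0 < Γ - 1 := by linarith
  have hh1 : 1 < h := by
    rw [hh]
    have := div_pos hP (mul_pos hΓ1' hR)
    have := div_pos hP hR
    linarith
  have hRh : 0 < R * h := mul_pos hR (by linarith)
  have hRh_eq : (Γ - 1) * (R * h) = (Γ - 1) * R + Γ * P := by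
    rw [hh]; field_simp; ring
  have hcsRh : cs ^ 2 * (R * h) = Γ * P := by rw [hcs2]; field_simp
  obtain ⟨hK, hPRh, hΓPRh, hF4⟩ := eos_facts Γ R P h hΓ1 hΓ2 hR hP hh1 hRh_eq
  have hcs1 : cs ^ 2 < 1 := by
    rw [hcs2, div_lt_one hRh]; exact hΓPRh
  obtain ⟨hcu, hpsi⟩ := psi_facts u v c cs r q huv hc hr2 hr hcs0 hcs1 hq2 hq hlam
  have hS : 0 < 1 - (u ^ 2 + v ^ 2) := by nlinarith
  clear hlam hq2 hq hcs2 hh hRh_eq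
  rw [hr2] at hV1 hV2 hV3
  have hV0sq : V0 ^ 2 = R ^ 2 / (1 - (u ^ 2 + v ^ 2)) * (1 - u / c) ^ 2 := by
    rw [hV0, mul_pow, div_pow, hr2]
  have hRHS := rhs_pos Γ R P h u v c cs hR hP hc hS hcu hcs1 hRh hcsRh hK hF4 hpsi
  have hmain : (c ^ 2 * (1 - (u ^ 2 + v ^ 2)) ^ 2) * (V3 ^ 2 - (V0 ^ 2 + V1 ^ 2 + V2 ^ 2))
      = (c - u) ^ 2 * (R ^ 2 * h ^ 2 - 2 * R * h * P - R ^ 2) * (1 - (u ^ 2 + v ^ 2))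
        + P ^ 2 * (c ^ 2 - 1) * (1 - (u ^ 2 + v ^ 2)) ^ 2 := by
    rw [hV0sq, hV1, hV2, hV3]
    field_simp
    ring
  have hgoal3 : V0 ^ 2 + V1 ^ 2 + V2 ^ 2 < V3 ^ 2 := by
    have := pos_aux (show (0:ℝ) < c ^ 2 * (1 - (u ^ 2 + v ^ 2)) ^ 2 by positivity) hmain hRHS
    linarith
  have hV0pos : 0 < V0 := by
    rw [hV0]
    have h1 : 0 < 1 - u / c := by rw [sub_pos, div_lt_one hc]; exact hcu
    exact mul_pos (div_pos hR hr) h1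
  have hpos2 : 0 < R * h * (1 - u ^ 2) - P * (1 - (u ^ 2 + v ^ 2)) := by
    nlinarith [mul_pos (sub_pos.2 hPRh) (show (0:ℝ) < 1 - u ^ 2 by nlinarith [sq_nonneg v]),
      mul_nonneg hP.le (sq_nonneg v)]
  have hVm : u * V1 < V3 := by
    have hid2 : (c * (1 - (u ^ 2 + v ^ 2))) * (V3 - u * V1)
        = (c - u) * (R * h * (1 - u ^ 2) - P * (1 - (u ^ 2 + v ^ 2))) := by
      rw [hV1, hV3]; field_simp; ring
    have := pos_aux (mul_pos hc hS) hid2 (mul_pos (by linarith) hpos2)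
    linarith
  exact ⟨hV0pos, en_pos u V0 V1 V2 V3 (by nlinarith [sq_nonneg v]) hV0pos hVm hgoal3, hgoal3⟩

end PCPAux



-- ============ new content ============
open RHDState

lemma good_of (X Y : Fin 4 → ℝ) (h0 : Y 0 = X 0)
    (h12 : Y 1 ^ 2 + Y 2 ^ 2 = X 1 ^ 2 + X 2 ^ 2) (h3 : Y 3 = X 3) (hX : good X) : good Y :=
  ⟨h0 ▸ hX.1, h3 ▸ hX.2.1, by rw [h0, h3]; linarith [hX.2.2, h12]⟩

/-- Reflection in the x direction. -/
def rx (s : RHDState) : RHDState :=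
  ⟨s.ρ, -s.u1, s.u2, s.p, s.hρ, s.hp, by simpa using s.hu⟩

/-- Swap of the two velocity components. -/
def sw (s : RHDState) : RHDState :=
  ⟨s.ρ, s.u2, s.u1, s.p, s.hρ, s.hp, by linarith [s.hu]⟩

lemma lorentz_rx (s : RHDState) : (rx s).lorentz = s.lorentz := by
  simp [lorentz, rx]

lemma lorentz_sw (s : RHDState) : (sw s).lorentz = s.lorentz := by
  simp [lorentz, sw, add_comm]

lemma enth_rx (Γ : ℝ) (s : RHDState) : (rx s).enth Γ = s.enth Γ := rfl

lemma enth_sw (Γ : ℝ) (s : RHDState) : (sw s).enth Γ = s.enth Γ := rfl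

lemma cs_rx (Γ : ℝ) (s : RHDState) : (rx s).cs Γ = s.cs Γ := rfl

lemma cs_sw (Γ : ℝ) (s : RHDState) : (sw s).cs Γ = s.cs Γ := rfl

lemma lamX4_rx (Γ : ℝ) (s : RHDState) : (rx s).lamX4 Γ = -(s.lamX1 Γ) := by
  have h1 : (rx s).u1 = -s.u1 := rfl
  have h2 : (rx s).u2 = s.u2 := rfl
  simp only [lamX4, lamX1, cs_rx, lorentz_rx, h1, h2, neg_sq]
  ring

lemma lamX4_sw (Γ : ℝ) (s : RHDState) : (sw s).lamX4 Γ = s.lamY4 Γ := by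
  have h1 : (sw s).u1 = s.u2 := rfl
  have h2 : (sw s).u2 = s.u1 := rfl
  simp only [lamX4, lamY4, cs_sw, lorentz_sw, h1, h2]
  ring

lemma lamX1_sw (Γ : ℝ) (s : RHDState) : (sw s).lamX1 Γ = s.lamY1 Γ := by
  have h1 : (sw s).u1 = s.u2 := rfl
  have h2 : (sw s).u2 = s.u1 := rfl
  simp only [lamX1, lamY1, cs_sw, lorentz_sw, h1, h2]
  ring

lemma coreX (Γ : ℝ) (hΓ1 : 1 < Γ) (hΓ2 : Γ ≤ 2) (s : RHDState) {c : ℝ}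
    (hc : 0 < c) (hlam : s.lamX4 Γ ≤ c) :
    good (s.U Γ - c⁻¹ • s.Fx Γ) := by
  have huv := s.hu
  have hR := s.hρ
  have hP := s.hp
  have hS : (0:ℝ) < 1 - (s.u1 ^ 2 + s.u2 ^ 2) := by nlinarith
  have hr : 0 < Real.sqrt (1 - (s.u1 ^ 2 + s.u2 ^ 2)) := Real.sqrt_pos.2 hS
  have hr2 : (Real.sqrt (1 - (s.u1 ^ 2 + s.u2 ^ 2))) ^ 2 = 1 - (s.u1 ^ 2 + s.u2 ^ 2) :=
    Real.sq_sqrt hS.le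
  have hlor : s.lorentz = 1 / Real.sqrt (1 - (s.u1 ^ 2 + s.u2 ^ 2)) := rfl
  have hΓ1' : 0 < Γ - 1 := by linarith
  have hh : s.enth Γ = 1 + s.p / ((Γ - 1) * s.ρ) + s.p / s.ρ := rfl
  have hh1 : 1 < s.enth Γ := by
    rw [hh]
    have := div_pos hP (mul_pos hΓ1' hR)
    have := div_pos hP hR
    linarith
  have hRh : 0 < s.ρ * s.enth Γ := mul_pos hR (by linarith)
  have hcs2 : (s.cs Γ) ^ 2 = Γ * s.p / (s.ρ * s.enth Γ) := Real.sq_sqrt (by positivity)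
  have hcs0 : 0 < s.cs Γ := Real.sqrt_pos.2 (by positivity)
  have hcs1 : (s.cs Γ) ^ 2 < 1 := by
    rw [hcs2, div_lt_one hRh]
    have hRh_eq : (Γ - 1) * (s.ρ * s.enth Γ) = (Γ - 1) * s.ρ + Γ * s.p := by
      rw [hh]; field_simp; ring
    nlinarith [mul_pos hΓ1' hR]
  have hqpos : (0:ℝ) < 1 - s.u1 ^ 2 - (s.cs Γ) ^ 2 * s.u2 ^ 2 := by
    nlinarith [sq_nonneg s.u2]
  have hq : 0 < Real.sqrt (1 - s.u1 ^ 2 - (s.cs Γ) ^ 2 * s.u2 ^ 2) := Real.sqrt_pos.2 hqpos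
  have hq2 : (Real.sqrt (1 - s.u1 ^ 2 - (s.cs Γ) ^ 2 * s.u2 ^ 2)) ^ 2
      = 1 - s.u1 ^ 2 - (s.cs Γ) ^ 2 * s.u2 ^ 2 := Real.sq_sqrt hqpos.le
  have hlam' : (s.u1 * (1 - (s.cs Γ) ^ 2) + s.cs Γ * Real.sqrt (1 - (s.u1 ^ 2 + s.u2 ^ 2)) *
        Real.sqrt (1 - s.u1 ^ 2 - (s.cs Γ) ^ 2 * s.u2 ^ 2)) /
        (1 - (s.cs Γ) ^ 2 * (s.u1 ^ 2 + s.u2 ^ 2)) ≤ c := by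
    have e : s.lamX4 Γ = (s.u1 * (1 - (s.cs Γ) ^ 2) +
        s.cs Γ * Real.sqrt (1 - (s.u1 ^ 2 + s.u2 ^ 2)) *
          Real.sqrt (1 - s.u1 ^ 2 - (s.cs Γ) ^ 2 * s.u2 ^ 2)) /
        (1 - (s.cs Γ) ^ 2 * (s.u1 ^ 2 + s.u2 ^ 2)) := by
      rw [lamX4, hlor, one_div, div_inv_eq_mul]
    rw [← e]; exact hlam
  obtain ⟨g0, g3, gq⟩ := main_ineq Γ s.ρ s.p s.u1 s.u2 c
      (Real.sqrt (1 - (s.u1 ^ 2 + s.u2 ^ 2))) (s.enth Γ) (s.cs Γ)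
      (Real.sqrt (1 - s.u1 ^ 2 - (s.cs Γ) ^ 2 * s.u2 ^ 2))
      hΓ1 hΓ2 hR hP huv hc hr2 hr hh hcs2 hcs0 hq2 hq hlam'
      ((s.U Γ - c⁻¹ • s.Fx Γ) 0) ((s.U Γ - c⁻¹ • s.Fx Γ) 1)
      ((s.U Γ - c⁻¹ • s.Fx Γ) 2) ((s.U Γ - c⁻¹ • s.Fx Γ) 3)
      (by simp [U, Fx, D, hlor]; field_simp)
      (by simp [U, Fx, m1, hlor]; field_simp; ring)
      (by simp [U, Fx, m2, hlor]; field_simp)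
      (by simp [U, Fx, En, hlor]; field_simp; ring)
  exact ⟨g0, g3, gq⟩

lemma coreXL (Γ : ℝ) (hΓ1 : 1 < Γ) (hΓ2 : Γ ≤ 2) (s : RHDState) {c : ℝ}
    (hc : c < 0) (hlam : c ≤ s.lamX1 Γ) :
    good (s.U Γ - c⁻¹ • s.Fx Γ) := by
  have h := coreX Γ hΓ1 hΓ2 (rx s) (c := -c) (by linarith)
    (by rw [lamX4_rx]; linarith)
  have e1 : (rx s).u1 = -s.u1 := rfl
  have e2 : (rx s).ρ = s.ρ := rfl
  have e3 : (rx s).p = s.p := rfl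
  have e4 : (rx s).u2 = s.u2 := rfl
  refine good_of _ _ ?_ ?_ ?_ h
  · simp [U, Fx, D, lorentz_rx, e1, e2, e3, inv_neg]
  · simp [U, Fx, m1, m2, lorentz_rx, enth_rx, e1, e2, e3, e4, inv_neg]
    ring
  · simp [U, Fx, En, lorentz_rx, enth_rx, e1, e2, e3, inv_neg]

lemma coreY (Γ : ℝ) (hΓ1 : 1 < Γ) (hΓ2 : Γ ≤ 2) (s : RHDState) {c : ℝ}
    (hc : 0 < c) (hlam : s.lamY4 Γ ≤ c) :
    good (s.U Γ - c⁻¹ • s.Fy Γ) := by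
  have h := coreX Γ hΓ1 hΓ2 (sw s) hc (by rw [lamX4_sw]; exact hlam)
  have e1 : (sw s).u1 = s.u2 := rfl
  have e2 : (sw s).ρ = s.ρ := rfl
  have e3 : (sw s).p = s.p := rfl
  have e4 : (sw s).u2 = s.u1 := rfl
  refine good_of _ _ ?_ ?_ ?_ h
  · simp [U, Fx, Fy, D, lorentz_sw, e1, e2, e3]
  · simp [U, Fx, Fy, m1, m2, lorentz_sw, enth_sw, e1, e2, e3, e4]
    ring
  · simp [U, Fx, Fy, En, lorentz_sw, enth_sw, e1, e2, e3]

lemma coreYL (Γ : ℝ) (hΓ1 : 1 < Γ) (hΓ2 : Γ ≤ 2) (s : RHDState) {c : ℝ}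
    (hc : c < 0) (hlam : c ≤ s.lamY1 Γ) :
    good (s.U Γ - c⁻¹ • s.Fy Γ) := by
  have h := coreXL Γ hΓ1 hΓ2 (sw s) hc (by rw [lamX1_sw]; exact hlam)
  have e1 : (sw s).u1 = s.u2 := rfl
  have e2 : (sw s).ρ = s.ρ := rfl
  have e3 : (sw s).p = s.p := rfl
  have e4 : (sw s).u2 = s.u1 := rfl
  refine good_of _ _ ?_ ?_ ?_ h
  · simp [U, Fx, Fy, D, lorentz_sw, e1, e2, e3]
  · simp [U, Fx, Fy, m1, m2, lorentz_sw, enth_sw, e1, e2, e3, e4]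
    ring
  · simp [U, Fx, Fy, En, lorentz_sw, enth_sw, e1, e2, e3]

/-- PCP property of the 2D HLL intermediate state: with wave speeds
`S_L = 2·min λ_A^{(1)}`, `S_R = 2·max λ_A^{(4)}`, `S_D = 2·min λ_B^{(1)}`,
`S_U = 2·max λ_B^{(4)}` over the four admissible corner states, and
`S_L < 0 < S_R`, `S_D < 0 < S_U`, the intermediate state `U*` satisfies
`D* > 0`, `E* > 0` and `(E*)² - (D*)² - |m*|² > 0`. -/
theorem intermediate_state_admissible (Γ : ℝ) (hΓ1 : 1 < Γ) (hΓ2 : Γ ≤ 2)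
    (sLD sRD sLU sRU : RHDState)
    (hLD : sLD.U Γ ∈ admissibleSet) (hRD : sRD.U Γ ∈ admissibleSet)
    (hLU : sLU.U Γ ∈ admissibleSet) (hRU : sRU.U Γ ∈ admissibleSet)
    (SL SR SD SU : ℝ)
    (hSL : SL = 2 * min (min (sLD.lamX1 Γ) (sRD.lamX1 Γ))
                        (min (sLU.lamX1 Γ) (sRU.lamX1 Γ)))
    (hSR : SR = 2 * max (max (sLD.lamX4 Γ) (sRD.lamX4 Γ))
                        (max (sLU.lamX4 Γ) (sRU.lamX4 Γ)))
    (hSD : SD = 2 * min (min (sLD.lamY1 Γ) (sRD.lamY1 Γ))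
                        (min (sLU.lamY1 Γ) (sRU.lamY1 Γ)))
    (hSU : SU = 2 * max (max (sLD.lamY4 Γ) (sRD.lamY4 Γ))
                        (max (sLU.lamY4 Γ) (sRU.lamY4 Γ)))
    (hL0 : SL < 0) (hR0 : 0 < SR) (hD0 : SD < 0) (hU0 : 0 < SU)
    (Ustar : Fin 4 → ℝ)
    (hUstar : Ustar = ((SR - SL) * (SU - SD))⁻¹ •
      ((SR * SU) • sRU.U Γ + (SL * SD) • sLD.U Γ - (SR * SD) • sRD.U Γ -
        (SL * SU) • sLU.U Γ - SU • (sRU.Fx Γ - sLU.Fx Γ) +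
        SD • (sRD.Fx Γ - sLD.Fx Γ) - SR • (sRU.Fy Γ - sRD.Fy Γ) +
        SL • (sLU.Fy Γ - sLD.Fy Γ))) :
    Ustar 0 > 0 ∧ Ustar 3 > 0 ∧
      (Ustar 3) ^ 2 - (Ustar 0) ^ 2 - ((Ustar 1) ^ 2 + (Ustar 2) ^ 2) > 0 := by
  have hR2 : 0 < SR / 2 := by linarith
  have hL2 : SL / 2 < 0 := by linarith
  have hU2 : 0 < SU / 2 := by linarith
  have hD2 : SD / 2 < 0 := by linarith
  have bRUx : sRU.lamX4 Γ ≤ SR / 2 := by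
    have := le_trans (le_max_right (sLU.lamX4 Γ) (sRU.lamX4 Γ))
      (le_max_right (max (sLD.lamX4 Γ) (sRD.lamX4 Γ)) _)
    rw [hSR]; linarith
  have bRDx : sRD.lamX4 Γ ≤ SR / 2 := by
    have := le_trans (le_max_right (sLD.lamX4 Γ) (sRD.lamX4 Γ))
      (le_max_left _ (max (sLU.lamX4 Γ) (sRU.lamX4 Γ)))
    rw [hSR]; linarith
  have bLUx : SL / 2 ≤ sLU.lamX1 Γ := by
    have := le_trans (min_le_right (min (sLD.lamX1 Γ) (sRD.lamX1 Γ)) _)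
      (min_le_left (sLU.lamX1 Γ) (sRU.lamX1 Γ))
    rw [hSL]; linarith
  have bLDx : SL / 2 ≤ sLD.lamX1 Γ := by
    have := le_trans (min_le_left _ (min (sLU.lamX1 Γ) (sRU.lamX1 Γ)))
      (min_le_left (sLD.lamX1 Γ) (sRD.lamX1 Γ))
    rw [hSL]; linarith
  have bRUy : sRU.lamY4 Γ ≤ SU / 2 := by
    have := le_trans (le_max_right (sLU.lamY4 Γ) (sRU.lamY4 Γ))
      (le_max_right (max (sLD.lamY4 Γ) (sRD.lamY4 Γ)) _)
    rw [hSU]; linarith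
  have bLUy : sLU.lamY4 Γ ≤ SU / 2 := by
    have := le_trans (le_max_left (sLU.lamY4 Γ) (sRU.lamY4 Γ))
      (le_max_right (max (sLD.lamY4 Γ) (sRD.lamY4 Γ)) _)
    rw [hSU]; linarith
  have bRDy : SD / 2 ≤ sRD.lamY1 Γ := by
    have := le_trans (min_le_left _ (min (sLU.lamY1 Γ) (sRU.lamY1 Γ)))
      (min_le_right (sLD.lamY1 Γ) (sRD.lamY1 Γ))
    rw [hSD]; linarith
  have bLDy : SD / 2 ≤ sLD.lamY1 Γ := by
    have := le_trans (min_le_left _ (min (sLU.lamY1 Γ) (sRU.lamY1 Γ)))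
      (min_le_left (sLD.lamY1 Γ) (sRD.lamY1 Γ))
    rw [hSD]; linarith
  have gRUx := coreX Γ hΓ1 hΓ2 sRU hR2 bRUx
  have gRDx := coreX Γ hΓ1 hΓ2 sRD hR2 bRDx
  have gLUx := coreXL Γ hΓ1 hΓ2 sLU hL2 bLUx
  have gLDx := coreXL Γ hΓ1 hΓ2 sLD hL2 bLDx
  have gRUy := coreY Γ hΓ1 hΓ2 sRU hU2 bRUy
  have gLUy := coreY Γ hΓ1 hΓ2 sLU hU2 bLUy
  have gRDy := coreYL Γ hΓ1 hΓ2 sRD hD2 bRDy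
  have gLDy := coreYL Γ hΓ1 hΓ2 sLD hD2 bLDy
  have hSRne : SR ≠ 0 := ne_of_gt hR0
  have hSLne : SL ≠ 0 := ne_of_lt hL0
  have hSUne : SU ≠ 0 := ne_of_gt hU0
  have hSDne : SD ≠ 0 := ne_of_lt hD0
  have hne1 : SR - SL ≠ 0 := by intro hx; rw [sub_eq_zero] at hx; linarith
  have hne2 : SU - SD ≠ 0 := by intro hx; rw [sub_eq_zero] at hx; linarith
  have key : Ustar = ((SR - SL) * (SU - SD))⁻¹ •
      ((SR * SU / 2) • (sRU.U Γ - (SR / 2)⁻¹ • sRU.Fx Γ) +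
       (SR * SU / 2) • (sRU.U Γ - (SU / 2)⁻¹ • sRU.Fy Γ) +
       (SL * SD / 2) • (sLD.U Γ - (SL / 2)⁻¹ • sLD.Fx Γ) +
       (SL * SD / 2) • (sLD.U Γ - (SD / 2)⁻¹ • sLD.Fy Γ) +
       (-(SR * SD) / 2) • (sRD.U Γ - (SR / 2)⁻¹ • sRD.Fx Γ) +
       (-(SR * SD) / 2) • (sRD.U Γ - (SD / 2)⁻¹ • sRD.Fy Γ) +
       (-(SL * SU) / 2) • (sLU.U Γ - (SL / 2)⁻¹ • sLU.Fx Γ) +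
       (-(SL * SU) / 2) • (sLU.U Γ - (SU / 2)⁻¹ • sLU.Fy Γ)) := by
    rw [hUstar]
    match_scalars <;> field_simp <;> ring
  have w1 : 0 < SR * SU / 2 := by positivity
  have w2 : 0 < SL * SD / 2 := div_pos (mul_pos_of_neg_of_neg hL0 hD0) two_pos
  have w3 : 0 < -(SR * SD) / 2 := div_pos (by nlinarith) two_pos
  have w4 : 0 < -(SL * SU) / 2 := div_pos (by nlinarith) two_pos
  have hΔ : 0 < ((SR - SL) * (SU - SD))⁻¹ :=
    inv_pos.2 (mul_pos (by linarith) (by linarith))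
  have hgood : good Ustar := by
    rw [key]
    exact good_smul hΔ (good_add (good_add (good_add (good_add (good_add (good_add
      (good_add (good_smul w1 gRUx) (good_smul w1 gRUy)) (good_smul w2 gLDx))
      (good_smul w2 gLDy)) (good_smul w3 gRDx)) (good_smul w3 gRDy))
      (good_smul w4 gLUx)) (good_smul w4 gLUy))
  exact ⟨hgood.1, hgood.2.1, by linarith [hgood.2.2]⟩
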